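/- Given desired trajectories $\eta^{\mathsf d} \in C^1([0,T])$ and $\sigma^{\mathsf d} \in C^1([0,T])$ with $\sigma^{\mathsf d} > 0$, and initial data $\mathbb E[X_\circ] = \eta^{\mathsf d}(0)$, $\mathbb V[X_\circ] = \sigma^{\mathsf d}(0)$, the controls $u_1^*(t) = \theta^{-1}(\eta^{\mathsf d})'(t) + \eta^{\mathsf d}(t)$ and $u_2^*(t)$ with $(u_2^*)^2(t) = 2\theta\sigma^{\mathsf d}(t) + (\sigma^{\mathsf d})'(t)$ yield, via the OU mean/variance formulas, perfect tracking: $\mathbb E[X(t)] = \eta^{\mathsf d}(t)$ and $\mathbb V[X(t)] = \sigma^{\mathsf d}(t)$ for all $t \in [0,T]$. -/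

import Mathlib

open MeasureTheory intervalIntegral

lemma key_int (c : ℝ) (f f' : ℝ → ℝ) (hf : ∀ t, HasDerivAt f (f' t) t)
    (hf'c : Continuous f') (hfc : Continuous f) (t : ℝ) :
    (∫ s in (0:ℝ)..t, (f' s + c * f s) * Real.exp (c * s))
      = f t * Real.exp (c * t) - f 0 := by
  have h : ∀ s ∈ Set.uIcc (0:ℝ) t,
      HasDerivAt (fun s => f s * Real.exp (c * s))
        ((f' s + c * f s) * Real.exp (c * s)) s := by
    intro s _
    have h1 : HasDerivAt (fun s : ℝ => c * s) c s := by
      simpa using (hasDerivAt_id s).const_mul c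
    have := (hf s).mul h1.exp
    refine this.congr_deriv ?_
    ring
  have hint : IntervalIntegrable (fun s => (f' s + c * f s) * Real.exp (c * s))
      volume 0 t := by
    apply Continuous.intervalIntegrable
    continuity
  have := intervalIntegral.integral_eq_sub_of_hasDerivAt h hint
  simpa [mul_zero, Real.exp_zero] using this

/-- perfect tracking for the OU process: for desired `C¹` trajectories
`η, σ` with `σ > 0`, initial data `E[X₀] = η(0)`, `V[X₀] = σ(0)`, and controls
`u₁*(t) = θ⁻¹ η'(t) + η(t)`, `(u₂*)²(t) = 2θσ(t) + σ'(t)`, the OU mean/variance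
formulas give perfect tracking: `E[X(t)] = η(t)` and `V[X(t)] = σ(t)` on `[0,T]`. -/
theorem stmt18 (θ T : ℝ) (hθ : 0 < θ) (hT : 0 < T)
    (η σ η' σ' : ℝ → ℝ)
    (hη : ∀ t, HasDerivAt η (η' t) t) (hη'c : Continuous η')
    (hσ : ∀ t, HasDerivAt σ (σ' t) t) (hσ'c : Continuous σ')
    (hηc : Continuous η) (hσc : Continuous σ)
    (hσpos : ∀ t ∈ Set.Icc (0 : ℝ) T, 0 < σ t)
    (u₁star u₂sq : ℝ → ℝ)
    (hu₁ : ∀ t, u₁star t = θ⁻¹ * η' t + η t)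
    (hu₂ : ∀ t, u₂sq t = 2 * θ * σ t + σ' t) :
    ∀ t ∈ Set.Icc (0 : ℝ) T,
      Real.exp (-θ * t) * η 0
          + θ * Real.exp (-θ * t) * (∫ s in (0 : ℝ)..t, u₁star s * Real.exp (θ * s))
        = η t
      ∧ Real.exp (-(2 * θ) * t) * σ 0
          + Real.exp (-(2 * θ) * t) * (∫ s in (0 : ℝ)..t, u₂sq s * Real.exp (2 * θ * s))
        = σ t := by
  intro t ht
  have hθ0 : θ ≠ 0 := ne_of_gt hθ
  constructor
  · have h1 : (∫ s in (0:ℝ)..t, u₁star s * Real.exp (θ * s))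
        = ∫ s in (0:ℝ)..t, θ⁻¹ * ((η' s + θ * η s) * Real.exp (θ * s)) := by
      apply intervalIntegral.integral_congr
      intro s _
      simp only
      rw [hu₁]
      field_simp
    rw [h1, intervalIntegral.integral_const_mul,
      key_int θ η η' hη hη'c hηc t]
    have he : Real.exp (-θ * t) = (Real.exp (θ * t))⁻¹ := by
      rw [← Real.exp_neg]; ring_nf
    rw [he]
    have hne : Real.exp (θ * t) ≠ 0 := Real.exp_ne_zero _
    field_simp
    ring
  · have h1 : (∫ s in (0:ℝ)..t, u₂sq s * Real.exp (2 * θ * s))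
        = ∫ s in (0:ℝ)..t, (σ' s + (2 * θ) * σ s) * Real.exp ((2 * θ) * s) := by
      apply intervalIntegral.integral_congr
      intro s _
      simp only
      rw [hu₂]; ring
    rw [h1, key_int (2 * θ) σ σ' hσ hσ'c hσc t]
    have he : Real.exp (-(2 * θ) * t) = (Real.exp (2 * θ * t))⁻¹ := by
      rw [← Real.exp_neg]; ring_nf
    rw [he]
    have hne : Real.exp (2 * θ * t) ≠ 0 := Real.exp_ne_zero _
    field_simp
    ring
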